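/- Let P be a neutral to the right random probability measure, X̲=(X₁,…,X_n) a sample from P, and B₁∈𝒜(u). Then for α_n-almost all x̲ with x_i∈B₁ᶜ for every i, and for every Borel Γ⊆[0,1]: 𝒫[P_{B₁}∈Γ | X̲=x̲] = E[1_Γ(P_{B₁})·(1−P_{B₁})ⁿ] / E[(1−P_{B₁})ⁿ]. -/

import Mathlib

open MeasureTheory ProbabilityTheory Set
open scoped ENNReal Classical BigOperators

/-- The collection of finite unions of members of `S`. -/
def finUnions {𝒳 : Type*} (S : Set (Set 𝒳)) : Set (Set 𝒳) :=
  {B | ∃ T : Finset (Set 𝒳), ↑T ⊆ S ∧ B = ⋃₀ ↑T}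

/-- An indexing collection on a topological space `𝒳`: a family of closed sets generating the
Borel σ-field, containing `∅` and `univ`, closed under arbitrary intersections, any two nonempty
members intersecting, and admitting a sequence of finite sub-semilattices approximating every
member from outside. -/
structure IndexingCollection (𝒳 : Type*) [TopologicalSpace 𝒳] [MeasurableSpace 𝒳] : Type _ where
  sets : Set (Set 𝒳)
  isClosed' : ∀ A ∈ sets, IsClosed A
  generates : MeasurableSpace.generateFrom sets = ‹MeasurableSpace 𝒳›
  empty_mem : ∅ ∈ sets
  univ_mem : Set.univ ∈ sets
  sInter_mem : ∀ S ⊆ sets, S.Nonempty → ⋂₀ S ∈ sets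
  inter_nonempty : ∀ A ∈ sets, ∀ B ∈ sets, A.Nonempty → B.Nonempty → (A ∩ B).Nonempty
  approx : ∃ An : ℕ → Set (Set 𝒳),
    (∀ n, An n ⊆ sets ∧ (An n).Finite ∧ ∀ A ∈ An n, ∀ B ∈ An n, A ∩ B ∈ An n) ∧
    ∀ A ∈ sets, ∃ Bn : ℕ → Set 𝒳,
      (∀ n, Bn n ∈ finUnions (An n)) ∧ A = ⋂ n, Bn n ∧ ∀ n, A ⊆ interior (Bn n)

variable {𝒳 Ω : Type*} [TopologicalSpace 𝒳] [MeasurableSpace 𝒳] [BorelSpace 𝒳]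
  [MeasurableSpace Ω]

/-- `P = (P_A)_{A ∈ ℬ}` is a random probability measure: the `P_A` are `[0,1]`-valued random
variables, finitely additive in distribution, with `P_𝒳 = 1` a.s. and countably additive in
distribution. -/
structure IsRPM (Pr : Measure Ω) (P : Set 𝒳 → Ω → ℝ) : Prop where
  meas : ∀ A : Set 𝒳, MeasurableSet A → Measurable (P A)
  mem_Icc : ∀ A : Set 𝒳, MeasurableSet A → ∀ ω, P A ω ∈ Set.Icc (0:ℝ) 1
  finAdd : ∀ (k m : ℕ) (A : ℕ → Set 𝒳), (∀ j, MeasurableSet (A j)) →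
    (∀ i j, i < k → j < k → i ≠ j → Disjoint (A i) (A j)) →
    ∀ c : Fin (m+1) → ℕ, Monotone c → c 0 = 0 → c (Fin.last m) = k →
      Measure.map (fun ω (l : Fin m) =>
          P (⋃ j ∈ Finset.Ico (c l.castSucc) (c l.succ), A j) ω) Pr
        = Measure.map (fun ω (l : Fin m) =>
            ∑ j ∈ Finset.Ico (c l.castSucc) (c l.succ), P (A j) ω) Pr
  univ_one : ∀ᵐ ω ∂Pr, P Set.univ ω = 1
  ctsAdd : ∀ A : ℕ → Set 𝒳, (∀ n, MeasurableSet (A n)) → Antitone A → (⋂ n, A n) = ∅ →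
    ∀ᵐ ω ∂Pr, Filter.Tendsto (fun n => P (A n) ω) Filter.atTop (nhds 0)

/-- The σ-field `ℱ_{B}` generated by `P_A`, `A ∈ 𝒜`, `A ⊆ B`. -/
def sigmaF (I : IndexingCollection 𝒳) (P : Set 𝒳 → Ω → ℝ) (B : Set 𝒳) : MeasurableSpace Ω :=
  ⨆ (A : Set 𝒳) (_ : A ∈ I.sets ∧ A ⊆ B), MeasurableSpace.comap (P A) inferInstance

/-- The σ-field generated by the whole process `P`. -/
def sigmaP (P : Set 𝒳 → Ω → ℝ) : MeasurableSpace Ω :=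
  ⨆ (A : Set 𝒳) (_ : MeasurableSet A), MeasurableSpace.comap (P A) inferInstance

/-- `Q` is a transition system: each `Q_{B₁B₂}` (for `B₁ ⊆ B₂` in `𝒜(u)`) is a transition
probability on `[0,1]` and the Chapman–Kolmogorov equations hold. -/
def IsTransitionSystem (I : IndexingCollection 𝒳)
    (Q : Set 𝒳 → Set 𝒳 → Kernel ℝ ℝ) : Prop :=
  (∀ B₁ B₂, B₁ ∈ finUnions I.sets → B₂ ∈ finUnions I.sets → B₁ ⊆ B₂ →
      ∀ z ∈ Set.Icc (0:ℝ) 1, Q B₁ B₂ z (Set.Icc (0:ℝ) 1) = 1) ∧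
  ∀ B₁ B₂ B₃, B₁ ∈ finUnions I.sets → B₂ ∈ finUnions I.sets → B₃ ∈ finUnions I.sets →
    B₁ ⊆ B₂ → B₂ ⊆ B₃ → ∀ z₁ ∈ Set.Icc (0:ℝ) 1, ∀ Γ : Set ℝ, MeasurableSet Γ →
      Q B₁ B₃ z₁ Γ = ∫⁻ z₂ in Set.Icc (0:ℝ) 1, Q B₂ B₃ z₂ Γ ∂(Q B₁ B₂ z₁)

/-- `P` is `𝒬`-Markov: for all `B₁ ⊆ B₂` in `𝒜(u)`,
`Pr[P_{B₂} ∈ Γ₂ | ℱ_{B₁}] = Q_{B₁B₂}(P_{B₁}; Γ₂)` a.s. -/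
def IsQMarkov (I : IndexingCollection 𝒳) (Pr : Measure Ω) (P : Set 𝒳 → Ω → ℝ)
    (Q : Set 𝒳 → Set 𝒳 → Kernel ℝ ℝ) : Prop :=
  ∀ B₁ B₂, B₁ ∈ finUnions I.sets → B₂ ∈ finUnions I.sets → B₁ ⊆ B₂ →
    ∀ Γ : Set ℝ, MeasurableSet Γ →
      Pr[Set.indicator {ω | P B₂ ω ∈ Γ} (fun _ => (1:ℝ)) | sigmaF I P B₁]
        =ᵐ[Pr] fun ω => (Q B₁ B₂ (P B₁ ω) Γ).toReal

/-- `X₁, …, X_n` is a sample from `P`: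
`Pr[X₁ ∈ A₁, …, X_n ∈ A_n | P] = ∏ᵢ P_{Aᵢ}` a.s. -/
def IsSample (Pr : Measure Ω) (P : Set 𝒳 → Ω → ℝ) {n : ℕ} (X : Fin n → Ω → 𝒳) : Prop :=
  (∀ i, Measurable (X i)) ∧
  ∀ A : Fin n → Set 𝒳, (∀ i, MeasurableSet (A i)) →
    Pr[Set.indicator {ω | ∀ i, X i ω ∈ A i} (fun _ => (1:ℝ)) | sigmaP P]
      =ᵐ[Pr] fun ω => ∏ i, P (A i) ω

/-- `V_{B₁B₂} = (P_{B₂} - P_{B₁})/(1 - P_{B₁})` on `{P_{B₁} < 1}`, and `1` elsewhere. -/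
noncomputable def Vr (P : Set 𝒳 → Ω → ℝ) (B₁ B₂ : Set 𝒳) (ω : Ω) : ℝ :=
  if P B₁ ω < 1 then (P B₂ ω - P B₁ ω) / (1 - P B₁ ω) else 1

/-- `P` is neutral to the right: for every chain `B₀ ⊆ … ⊆ B_k` in `𝒜(u)` the random variables
`P_{B₀}, V_{B₀B₁}, …, V_{B_{k-1}B_k}` are independent. -/
def IsNTR (I : IndexingCollection 𝒳) (Pr : Measure Ω) (P : Set 𝒳 → Ω → ℝ) : Prop :=
  ∀ (k : ℕ) (B : Fin (k+1) → Set 𝒳), (∀ i, B i ∈ finUnions I.sets) →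
    (∀ i j, i ≤ j → B i ⊆ B j) →
    iIndepFun (m := fun _ => inferInstance)
      (fun i : Fin (k+1) => Fin.cases (motive := fun _ => Ω → ℝ) (P (B 0))
        (fun i' : Fin k => Vr P (B i'.castSucc) (B i'.succ)) i) Pr

/-- A family `(F_{B₁B₂})` of laws on `[0,1]` is a neutral to the right system. -/
def IsNTRSystem (I : IndexingCollection 𝒳) (F : Set 𝒳 → Set 𝒳 → Measure ℝ) : Prop :=
  ∀ B₁ B₂ B₃, B₁ ∈ finUnions I.sets → B₂ ∈ finUnions I.sets → B₃ ∈ finUnions I.sets →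
    B₁ ⊆ B₂ → B₂ ⊆ B₃ → ∀ Γ : Set ℝ, MeasurableSet Γ →
      F B₁ B₃ Γ = ∫⁻ y in Set.Icc (0:ℝ) 1, ∫⁻ z in Set.Icc (0:ℝ) 1,
        Γ.indicator (fun _ => (1:ℝ≥0∞)) (y + z - y * z) ∂(F B₂ B₃) ∂(F B₁ B₂)


/-! ### Auxiliary lemmas -/

section Aux

variable {𝒳 Ω : Type*} [TopologicalSpace 𝒳] [MeasurableSpace 𝒳] [BorelSpace 𝒳]
  [MeasurableSpace Ω]

namespace StmtAux

variable {S : Set (Set 𝒳)}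

lemma mem_finUnions_of_mem {A : Set 𝒳} (hA : A ∈ S) : A ∈ finUnions S :=
  ⟨{A}, by simpa using hA, by simp⟩

lemma union_mem_finUnions {A B : Set 𝒳} (hA : A ∈ finUnions S) (hB : B ∈ finUnions S) :
    A ∪ B ∈ finUnions S := by
  obtain ⟨T₁, hT₁, rfl⟩ := hA; obtain ⟨T₂, hT₂, rfl⟩ := hB
  exact ⟨T₁ ∪ T₂, by push_cast; exact union_subset hT₁ hT₂, by push_cast; rw [sUnion_union]⟩

lemma inter_mem_finUnions (hS : ∀ A ∈ S, ∀ B ∈ S, A ∩ B ∈ S)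
    {A B : Set 𝒳} (hA : A ∈ finUnions S) (hB : B ∈ finUnions S) :
    A ∩ B ∈ finUnions S := by
  obtain ⟨T₁, hT₁, rfl⟩ := hA; obtain ⟨T₂, hT₂, rfl⟩ := hB
  refine ⟨(T₁ ×ˢ T₂).image fun p => p.1 ∩ p.2, ?_, ?_⟩
  · intro s hs
    simp only [Finset.coe_image, Finset.coe_product, mem_image, Set.mem_prod] at hs
    obtain ⟨⟨a, b⟩, ⟨ha, hb⟩, rfl⟩ := hs
    exact hS a (hT₁ ha) b (hT₂ hb)
  · ext x
    constructor
    · rintro ⟨hx1, hx2⟩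
      obtain ⟨a, ha, hxa⟩ := hx1
      obtain ⟨b, hb, hxb⟩ := hx2
      refine ⟨a ∩ b, ?_, hxa, hxb⟩
      simp only [Finset.coe_image, Finset.coe_product, mem_image, Set.mem_prod]
      exact ⟨(a, b), ⟨ha, hb⟩, rfl⟩
    · rintro ⟨t, ht, hxt⟩
      simp only [Finset.coe_image, Finset.coe_product, mem_image, Set.mem_prod] at ht
      obtain ⟨⟨a, b⟩, ⟨ha, hb⟩, rfl⟩ := ht
      exact ⟨⟨a, ha, hxt.1⟩, ⟨b, hb, hxt.2⟩⟩

lemma isClosed_of_mem_finUnions (hS : ∀ A ∈ S, IsClosed A)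
    {B : Set 𝒳} (hB : B ∈ finUnions S) : IsClosed B := by
  obtain ⟨T, hT, rfl⟩ := hB
  rw [sUnion_eq_biUnion]
  exact T.finite_toSet.isClosed_biUnion fun i hi => hS i (hT hi)

variable (I : IndexingCollection 𝒳)

lemma inter_mem_sets {A B : Set 𝒳} (hA : A ∈ I.sets) (hB : B ∈ I.sets) : A ∩ B ∈ I.sets := by
  have h := I.sInter_mem {A, B} ?_ ⟨A, by simp⟩
  · simpa using h
  · intro x hx
    rcases hx with rfl | hx
    · exact hA
    · simpa using hx ▸ hB

lemma univ_mem_finUnions : (univ : Set 𝒳) ∈ finUnions I.sets :=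
  mem_finUnions_of_mem I.univ_mem

lemma measurableSet_of_mem_finUnions {B : Set 𝒳} (hB : B ∈ finUnions I.sets) :
    MeasurableSet B :=
  (isClosed_of_mem_finUnions (fun A hA => I.isClosed' A hA) hB).measurableSet

lemma isPiSystem_finUnions : IsPiSystem (finUnions I.sets) :=
  fun s hs t ht _ => inter_mem_finUnions (fun A hA B hB => inter_mem_sets I hA hB) hs ht

lemma generateFrom_finUnions_eq :
    MeasurableSpace.generateFrom (finUnions I.sets) = ‹MeasurableSpace 𝒳› := by
  refine le_antisymm ?_ ?_
  · exact MeasurableSpace.generateFrom_le fun B hB => measurableSet_of_mem_finUnions I hB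
  · exact I.generates.symm.le.trans
      (MeasurableSpace.generateFrom_mono fun A hA => mem_finUnions_of_mem hA)

end StmtAux

namespace StmtAux

variable {Pr : Measure Ω} [IsProbabilityMeasure Pr] {P : Set 𝒳 → Ω → ℝ}

lemma ae_eq_one_of_map_fin1 {f g : Ω → ℝ} (hf : Measurable f) (hg : Measurable g)
    (h : Measure.map (fun ω (_ : Fin 1) => f ω) Pr = Measure.map (fun ω (_ : Fin 1) => g ω) Pr)
    (hf1 : ∀ᵐ ω ∂Pr, f ω = 1) : ∀ᵐ ω ∂Pr, g ω = 1 := by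
  have hs : MeasurableSet {v : Fin 1 → ℝ | v 0 = 1} :=
    (measurable_pi_apply 0) (measurableSet_singleton 1)
  have h2 := congrArg (fun μ : Measure (Fin 1 → ℝ) => μ {v | v 0 = 1}) h
  rw [Measure.map_apply (measurable_pi_lambda _ fun _ => hf) hs,
    Measure.map_apply (measurable_pi_lambda _ fun _ => hg) hs] at h2
  have hfs : ((fun ω (_ : Fin 1) => f ω) ⁻¹' {v | v 0 = 1}) = {ω | f ω = 1} := rfl
  have hgs : ((fun ω (_ : Fin 1) => g ω) ⁻¹' {v | v 0 = 1}) = {ω | g ω = 1} := rfl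
  rw [hfs, hgs] at h2
  have h1 : Pr {ω | f ω = 1} = 1 := by
    rw [measure_congr (ae_eq_univ.mpr ?_)]
    · exact measure_univ
    · filter_upwards [hf1] with ω hω
      simp [hω]
  rw [h1] at h2
  have hgm : MeasurableSet {ω | g ω = 1} := hg (measurableSet_singleton 1)
  have hcompl := measure_compl hgm (measure_ne_top Pr _)
  rw [← h2] at hcompl
  simp only [measure_univ] at hcompl
  rw [Filter.eventually_iff, mem_ae_iff]
  have h0 : Pr {ω | g ω = 1}ᶜ = 0 := by rw [hcompl]; simp
  convert h0 using 2

lemma rpm_sum_eq_one (hP : IsRPM Pr P) {k : ℕ} (A : ℕ → Set 𝒳)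
    (hA : ∀ j, MeasurableSet (A j)) (hd : ∀ i j, i < k → j < k → i ≠ j → Disjoint (A i) (A j))
    (hU : (⋃ j ∈ Finset.range k, A j) = univ) :
    ∀ᵐ ω ∂Pr, ∑ j ∈ Finset.range k, P (A j) ω = 1 := by
  have hc : Monotone (fun l : Fin 2 => if l = 0 then 0 else k) := by
    intro a b hab
    fin_cases a <;> fin_cases b <;> simp_all
  have hmap := hP.finAdd k 1 A hA hd (fun l => if l = 0 then 0 else k) hc (by simp)
    (by norm_num [Fin.last])
  have hfix : ∀ l : Fin 1, (if l.castSucc = 0 then 0 else k) = 0 ∧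
      (if l.succ = (0 : Fin 2) then 0 else k) = k := by
    intro l
    have hl0 : l = 0 := Subsingleton.elim l 0
    subst hl0
    constructor <;> norm_num [Fin.ext_iff]
  have hL : (fun ω (l : Fin 1) =>
      P (⋃ j ∈ Finset.Ico (if l.castSucc = 0 then 0 else k) (if l.succ = (0:Fin 2) then 0 else k),
        A j) ω) = fun ω (_ : Fin 1) => P univ ω := by
    funext ω l
    rw [(hfix l).1, (hfix l).2]
    congr 1
    rw [← Finset.range_eq_Ico]
    exact hU
  have hR : (fun ω (l : Fin 1) =>
      ∑ j ∈ Finset.Ico (if l.castSucc = 0 then 0 else k) (if l.succ = (0:Fin 2) then 0 else k),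
        P (A j) ω) = fun ω (_ : Fin 1) => ∑ j ∈ Finset.range k, P (A j) ω := by
    funext ω l
    rw [(hfix l).1, (hfix l).2, ← Finset.range_eq_Ico]
  rw [hL, hR] at hmap
  exact ae_eq_one_of_map_fin1 (hP.meas univ MeasurableSet.univ)
    (Finset.measurable_sum _ fun j _ => hP.meas _ (hA j)) hmap hP.univ_one

lemma rpm_add_pair (hP : IsRPM Pr P) {D E : Set 𝒳} (hD : MeasurableSet D)
    (hE : MeasurableSet E) (hDE : Disjoint D E) :
    ∀ᵐ ω ∂Pr, P (D ∪ E) ω = P D ω + P E ω := by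
  have hRm : MeasurableSet (D ∪ E)ᶜ := (hD.union hE).compl
  have hDR : Disjoint D (D ∪ E)ᶜ := disjoint_compl_right.mono_left subset_union_left
  have hER : Disjoint E (D ∪ E)ᶜ := disjoint_compl_right.mono_left subset_union_right
  have h3 := rpm_sum_eq_one hP (k := 3)
    (fun j => if j = 0 then D else if j = 1 then E else if j = 2 then (D ∪ E)ᶜ else ∅)
    (by
      intro j; split_ifs
      exacts [hD, hE, hRm, MeasurableSet.empty])
    (by
      intro i j hi hj hij
      interval_cases i <;> interval_cases j <;> simp only [reduceIte] <;>
        first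
          | exact absurd rfl hij
          | exact hDE | exact hDE.symm | exact hDR | exact hDR.symm
          | exact hER | exact hER.symm)
    (by
      ext x
      simp only [Finset.mem_range, mem_iUnion, mem_univ, iff_true]
      by_cases hx : x ∈ D
      · exact ⟨0, by norm_num, by simpa⟩
      by_cases hx2 : x ∈ E
      · exact ⟨1, by norm_num, by simpa⟩
      · refine ⟨2, by norm_num, ?_⟩
        simp [hx, hx2])
  have h2 := rpm_sum_eq_one hP (k := 2)
    (fun j => if j = 0 then D ∪ E else if j = 1 then (D ∪ E)ᶜ else ∅)
    (by
      intro j; split_ifs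
      exacts [hD.union hE, hRm, MeasurableSet.empty])
    (by
      intro i j hi hj hij
      interval_cases i <;> interval_cases j <;> simp only [reduceIte] <;>
        first
          | exact absurd rfl hij
          | exact disjoint_compl_right | exact disjoint_compl_right.symm)
    (by
      ext x
      simp only [Finset.mem_range, mem_iUnion, mem_univ, iff_true]
      by_cases hx : x ∈ D ∪ E
      · exact ⟨0, by norm_num, by simpa⟩
      · refine ⟨1, by norm_num, ?_⟩
        simp only [reduceIte, mem_compl_iff]
        exact hx)
  filter_upwards [h3, h2] with ω h3ω h2ω
  simp only [Finset.sum_range_succ, Finset.sum_range_zero] at h3ω h2ω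
  norm_num at h3ω h2ω
  linarith

lemma rpm_empty_zero (hP : IsRPM Pr P) : ∀ᵐ ω ∂Pr, P (∅ : Set 𝒳) ω = 0 := by
  have h := rpm_add_pair hP MeasurableSet.empty MeasurableSet.empty (disjoint_bot_left)
  filter_upwards [h] with ω hω
  simp only [Set.union_empty] at hω
  linarith

lemma rpm_compl_eq (hP : IsRPM Pr P) {D : Set 𝒳} (hD : MeasurableSet D) :
    ∀ᵐ ω ∂Pr, P Dᶜ ω = 1 - P D ω := by
  have h := rpm_add_pair hP hD hD.compl disjoint_compl_right
  filter_upwards [h, hP.univ_one] with ω h1 h2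
  rw [Set.union_compl_self] at h1
  rw [h2] at h1
  linarith

lemma rpm_add_finset (hP : IsRPM Pr P) {ι : Type*} (s : Finset ι) (E : ι → Set 𝒳)
    (hE : ∀ i, MeasurableSet (E i)) (hd : (s : Set ι).Pairwise (Function.onFun Disjoint E)) :
    ∀ᵐ ω ∂Pr, P (⋃ i ∈ s, E i) ω = ∑ i ∈ s, P (E i) ω := by
  classical
  induction s using Finset.induction_on with
  | empty =>
    filter_upwards [rpm_empty_zero hP] with ω hω
    simpa using hω
  | @insert a s ha ih =>
    have hd' : (s : Set ι).Pairwise (Function.onFun Disjoint E) :=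
      hd.mono (by simp [Set.subset_insert])
    have hdis : Disjoint (E a) (⋃ i ∈ s, E i) := by
      rw [Set.disjoint_iUnion₂_right]
      intro i hi
      exact hd (by simp) (by simp [hi]) (by rintro rfl; exact ha hi)
    have hpair := rpm_add_pair hP (hE a) (s.measurableSet_biUnion fun i _ => hE i) hdis
    filter_upwards [hpair, ih hd'] with ω h1 h2
    rw [Finset.set_biUnion_insert, h1, h2, Finset.sum_insert ha]

lemma chain_telescope {K : ℕ → Set 𝒳} (hK : ∀ j, K j ⊆ K (j+1)) (m : ℕ) :
    K m ⊆ K 0 ∪ ⋃ j ∈ Finset.range m, (K (j+1) \ K j) := by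
  induction m with
  | zero => simp
  | succ m ih =>
    intro x hx
    by_cases hxm : x ∈ K m
    · rcases ih hxm with h | h
      · exact Or.inl h
      · refine Or.inr ?_
        simp only [Finset.mem_range, mem_iUnion] at h ⊢
        obtain ⟨j, hj, hxj⟩ := h
        exact ⟨j, by omega, hxj⟩
    · refine Or.inr ?_
      simp only [Finset.mem_range, mem_iUnion]
      exact ⟨m, by omega, hx, hxm⟩

lemma chain_exists (F : Set (Set 𝒳))
    (hunion : ∀ A ∈ F, ∀ B ∈ F, A ∪ B ∈ F) (hinter : ∀ A ∈ F, ∀ B ∈ F, A ∩ B ∈ F)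
    (huniv : (univ : Set 𝒳) ∈ F) {B₁ : Set 𝒳} (hB₁ : B₁ ∈ F) :
    ∀ {n : ℕ} (C : Fin n → Set 𝒳), (∀ i, C i ∈ F) → (∀ i, B₁ ⊆ C i) →
    ∃ (M : ℕ) (K : ℕ → Set 𝒳) (J : Fin n → Finset ℕ),
      (∀ j, K j ∈ F) ∧ (∀ j, K j ⊆ K (j+1)) ∧ K 0 = B₁ ∧ (∀ j, M ≤ j → K j = univ) ∧
      ∀ i, (∀ j ∈ J i, j < M) ∧ C i = B₁ ∪ ⋃ j ∈ J i, (K (j+1) \ K j) := by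
  intro n
  induction n with
  | zero =>
    intro C _ _
    refine ⟨1, fun j => if j = 0 then B₁ else univ, fun i => i.elim0, ?_, ?_, by simp, ?_, ?_⟩
    · intro j; dsimp only; split_ifs; exacts [hB₁, huniv]
    · intro j
      dsimp only
      by_cases h : j = 0
      · subst h
        rw [if_pos rfl, if_neg (by omega)]
        exact subset_univ _
      · rw [if_neg h, if_neg (by omega)]
    · intro j hj
      dsimp only
      rw [if_neg (by omega)]
    · exact fun i => i.elim0
  | succ n ih =>
    intro C hCF hCsub
    obtain ⟨M, K, J, hKF, hKmono, hK0, hKuniv, hJ⟩ :=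
      ih (fun i => C i.succ) (fun i => hCF i.succ) (fun i => hCsub i.succ)
    set K' : ℕ → Set 𝒳 := fun j =>
      if j % 2 = 0 then K (j / 2) else K (j / 2) ∪ (K (j / 2 + 1) ∩ C 0) with hK'def
    have hK'even : ∀ a, K' (2 * a) = K a := by
      intro a
      have e1 : 2 * a % 2 = 0 := by omega
      have e2 : 2 * a / 2 = a := by omega
      simp only [hK'def]
      rw [if_pos e1, e2]
    have hK'odd : ∀ a, K' (2 * a + 1) = K a ∪ (K (a + 1) ∩ C 0) := by
      intro a
      have e1 : ¬((2 * a + 1) % 2 = 0) := by omega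
      have e2 : (2 * a + 1) / 2 = a := by omega
      simp only [hK'def]
      rw [if_neg e1, e2]
    have hdiffodd : ∀ a, K' (2 * a + 1) \ K' (2 * a) = (K (a + 1) ∩ C 0) \ K a := by
      intro a
      rw [hK'even, hK'odd]
      ext x
      simp only [mem_diff, mem_union, mem_inter_iff]
      tauto
    have hdiffeven : ∀ a, K' (2 * a + 2) \ K' (2 * a + 1) = (K (a + 1) \ K a) \ C 0 := by
      intro a
      have h2 : (2 * a + 2 : ℕ) = 2 * (a + 1) := by ring
      rw [h2, hK'even, hK'odd]
      ext x
      simp only [mem_diff, mem_union, mem_inter_iff]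
      tauto
    have hpairunion : ∀ a, (K' (2 * a + 1) \ K' (2 * a)) ∪ (K' (2 * a + 2) \ K' (2 * a + 1))
        = K (a + 1) \ K a := by
      intro a
      rw [hdiffodd, hdiffeven]
      ext x
      simp only [mem_union, mem_diff, mem_inter_iff]
      have hsub : x ∈ K a → x ∈ K (a + 1) := fun h => hKmono a h
      by_cases hxc : x ∈ C 0 <;> tauto
    refine ⟨2 * M, K', Fin.cases ((Finset.range M).image fun j => 2 * j)
      (fun i => (J i).biUnion fun j => {2 * j, 2 * j + 1}), ?_, ?_, ?_, ?_, ?_⟩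
    · intro j
      simp only [hK'def]
      split_ifs
      · exact hKF _
      · exact hunion _ (hKF _) _ (hinter _ (hKF _) _ (hCF 0))
    · intro j
      rcases Nat.even_or_odd j with ⟨a, ha⟩ | ⟨a, ha⟩
      · subst ha
        rw [show a + a = 2 * a by ring, hK'even, hK'odd]
        exact subset_union_left
      · subst ha
        rw [show 2*a+1+1 = 2*(a+1) by ring, hK'even, hK'odd]
        exact union_subset (hKmono a) inter_subset_left
    · have h0 := hK'even 0
      simpa using h0.trans hK0
    · intro j hj
      rcases Nat.even_or_odd j with ⟨a, ha⟩ | ⟨a, ha⟩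
      · subst ha
        rw [show a + a = 2 * a by ring, hK'even]
        exact hKuniv a (by omega)
      · subst ha
        rw [hK'odd]
        rw [hKuniv a (by omega)]
        simp
    · intro i
      refine Fin.cases ?_ ?_ i
      · constructor
        · intro j hj
          simp only [Fin.cases_zero, Finset.mem_image, Finset.mem_range] at hj
          obtain ⟨a, ha, rfl⟩ := hj
          omega
        · simp only [Fin.cases_zero]
          apply Subset.antisymm
          · intro x hx
            by_cases hxB : x ∈ B₁
            · exact Or.inl hxB
            · have hxM : x ∈ K M := by rw [hKuniv M le_rfl]; trivial
              have htel := chain_telescope hKmono M hxM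
              rw [hK0] at htel
              rcases htel with h | h
              · exact absurd h hxB
              · simp only [Finset.mem_range, mem_iUnion] at h
                obtain ⟨j, hj, hxj⟩ := h
                refine Or.inr ?_
                simp only [Finset.mem_image, Finset.mem_range, mem_iUnion]
                refine ⟨2 * j, ⟨j, hj, rfl⟩, ?_⟩
                rw [hdiffodd j]
                exact ⟨⟨hxj.1, hx⟩, hxj.2⟩
          · refine union_subset (hCsub 0) ?_
            intro x hx
            simp only [mem_iUnion, Finset.mem_image, Finset.mem_range] at hx
            obtain ⟨j, ⟨a, ha, rfl⟩, hxj⟩ := hx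
            rw [hdiffodd a] at hxj
            exact hxj.1.2
      · intro i
        obtain ⟨hJb, hJc⟩ := hJ i
        constructor
        · intro j hj
          simp only [Fin.cases_succ, Finset.mem_biUnion, Finset.mem_insert,
            Finset.mem_singleton] at hj
          obtain ⟨a, ha, rfl | rfl⟩ := hj <;> have := hJb a ha <;> omega
        · simp only [Fin.cases_succ]
          rw [hJc]
          congr 1
          rw [Finset.set_biUnion_biUnion]
          symm
          refine Set.iUnion₂_congr fun j hj => ?_
          rw [Finset.set_biUnion_insert, Finset.set_biUnion_singleton,
            show 2 * j + 1 + 1 = 2 * j + 2 from rfl]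
          exact hpairunion j

lemma sum_prod_range (m : ℕ) (v : ℕ → ℝ) :
    ∑ j ∈ Finset.range m, (∏ l ∈ Finset.range j, (1 - v l)) * v j
      = 1 - ∏ l ∈ Finset.range m, (1 - v l) := by
  induction m with
  | zero => simp
  | succ m ih =>
    rw [Finset.sum_range_succ, Finset.prod_range_succ, ih]
    ring

end StmtAux

end Aux

section MainProof

variable {𝒳 Ω : Type*} [TopologicalSpace 𝒳] [MeasurableSpace 𝒳] [BorelSpace 𝒳]
  [MeasurableSpace Ω] {Pr : Measure Ω} [IsProbabilityMeasure Pr] {P : Set 𝒳 → Ω → ℝ}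
  {n : ℕ} {X : Fin n → Ω → 𝒳} {B₁ : Set 𝒳}

open StmtAux

lemma measurable_Vr (hP : IsRPM Pr P) {A B : Set 𝒳} (hA : MeasurableSet A)
    (hB : MeasurableSet B) : Measurable (Vr P A B) := by
  unfold Vr
  exact Measurable.ite (measurableSet_lt (hP.meas A hA) measurable_const)
    (((hP.meas B hB).sub (hP.meas A hA)).div (measurable_const.sub (hP.meas A hA)))
    measurable_const

lemma stepB (hP : IsRPM Pr P) (hX : IsSample Pr P X) (hB₁m : MeasurableSet B₁)
    (D : Fin n → Set 𝒳) (hD : ∀ i, MeasurableSet (D i)) (Γ' : Set ℝ)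
    (hΓ' : MeasurableSet Γ') :
    Pr {ω | (∀ i, X i ω ∈ D i) ∧ P B₁ ω ∈ Γ'}
      = ENNReal.ofReal (∫ ω, Γ'.indicator (fun _ => (1:ℝ)) (P B₁ ω) * ∏ i, P (D i) ω ∂Pr) := by
  classical
  have hm : sigmaP P ≤ ‹MeasurableSpace Ω› := by
    refine iSup_le fun A => iSup_le fun hA => ?_
    exact measurable_iff_comap_le.mp (hP.meas A hA)
  set S := {ω | ∀ i, X i ω ∈ D i} with hSdef
  have hS : MeasurableSet S := by
    have hSeq : S = ⋂ i, (X i) ⁻¹' (D i) := by ext ω; simp [hSdef]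
    rw [hSeq]
    exact MeasurableSet.iInter fun i => hX.1 i (hD i)
  have hPB : Measurable[sigmaP P] (P B₁) := by
    refine measurable_iff_comap_le.mpr ?_
    exact le_iSup_of_le B₁ (le_iSup_of_le hB₁m le_rfl)
  set G := (P B₁) ⁻¹' Γ' with hGdef
  have hG : MeasurableSet[sigmaP P] G := hPB hΓ'
  have hG0 : MeasurableSet G := (hP.meas B₁ hB₁m) hΓ'
  have hind : Integrable (S.indicator fun _ => (1:ℝ)) Pr := (integrable_const 1).indicator hS
  have h1 : ∫ ω in G, (S.indicator fun _ => (1:ℝ)) ω ∂Pr = (Pr (S ∩ G)).toReal := by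
    rw [← integral_indicator hG0]
    rw [Set.indicator_indicator]
    rw [Set.inter_comm G S]
    rw [show (fun _ : Ω => (1:ℝ)) = 1 from rfl]
    rw [integral_indicator_one (hS.inter hG0)]
    rfl
  have h2 := setIntegral_condExp hm hind hG
  have h3 := hX.2 D hD
  have h4 : ∫ ω in G, (∏ i, P (D i) ω) ∂Pr = (Pr (S ∩ G)).toReal := by
    rw [← h1, ← h2]
    exact integral_congr_ae (ae_restrict_of_ae h3.symm)
  have h5 : ∫ ω in G, (∏ i, P (D i) ω) ∂Pr
      = ∫ ω, Γ'.indicator (fun _ => (1:ℝ)) (P B₁ ω) * ∏ i, P (D i) ω ∂Pr := by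
    rw [← integral_indicator hG0]
    refine integral_congr_ae (Filter.Eventually.of_forall fun ω => ?_)
    by_cases hω : P B₁ ω ∈ Γ' <;>
      simp [Set.indicator_apply, hGdef, hω]
  have hset : {ω | (∀ i, X i ω ∈ D i) ∧ P B₁ ω ∈ Γ'} = S ∩ G := rfl
  rw [hset, ← h5, h4, ENNReal.ofReal_toReal (measure_ne_top Pr _)]

lemma decomp (I : IndexingCollection 𝒳) (hP : IsRPM Pr P) (hNTR : IsNTR I Pr P)
    (hB₁ : B₁ ∈ finUnions I.sets) (Bv : Fin n → Set 𝒳)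
    (hBv : ∀ i, Bv i ∈ finUnions I.sets) :
    ∃ W : Ω → ℝ, Measurable W ∧ (∀ᵐ ω ∂Pr, W ω ∈ Set.Icc (0:ℝ) 1) ∧
      IndepFun (P B₁) W Pr ∧
      ∀ᵐ ω ∂Pr, (∏ i, P (Bv i ∩ B₁ᶜ) ω) = (1 - P B₁ ω) ^ n * W ω := by
  classical
  have hB₁m : MeasurableSet B₁ := measurableSet_of_mem_finUnions I hB₁
  obtain ⟨M, K, J, hKF, hKmono, hK0, hKuniv, hJ⟩ :=
    chain_exists (finUnions I.sets)
      (fun A hA B hB => union_mem_finUnions hA hB)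
      (fun A hA B hB => inter_mem_finUnions (fun A' hA' B' hB' => inter_mem_sets I hA' hB') hA hB)
      (univ_mem_finUnions I) hB₁ (fun i => B₁ ∪ Bv i)
      (fun i => union_mem_finUnions hB₁ (hBv i)) (fun i => subset_union_left)
  have hKm : ∀ j, MeasurableSet (K j) := fun j => measurableSet_of_mem_finUnions I (hKF j)
  have hKmon : Monotone K := monotone_nat_of_le_succ hKmono
  have hJlt : ∀ (i : Fin n), ∀ j ∈ J i, j < M := fun i => (hJ i).1
  set V : ℕ → Ω → ℝ := fun l ω => Vr P (K l) (K (l+1)) ω with hV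
  have hVm : ∀ l, Measurable (V l) := fun l => measurable_Vr hP (hKm l) (hKm (l+1))
  set F : (Fin M → ℝ) → ℝ := fun v => ∏ i : Fin n, ∑ j ∈ (J i).attach,
      (∏ l ∈ (Finset.range (j : ℕ)).attach,
        (1 - v ⟨(l : ℕ), by
          have h1 := Finset.mem_range.mp l.2
          have h2 := hJlt i (j : ℕ) j.2
          omega⟩)) * v ⟨(j : ℕ), hJlt i (j : ℕ) j.2⟩ with hF
  have hFm : Measurable F := by
    rw [hF]
    refine Finset.measurable_prod _ fun i _ => ?_
    refine Finset.measurable_sum _ fun j _ => ?_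
    refine Measurable.mul ?_ (measurable_pi_apply _)
    exact Finset.measurable_prod _ fun l _ => measurable_const.sub (measurable_pi_apply _)
  set Vvec : Ω → Fin M → ℝ := fun ω l => V (l : ℕ) ω with hVvec
  have hVvecm : Measurable Vvec := measurable_pi_lambda _ fun l => hVm _
  set W : Ω → ℝ := fun ω => F (Vvec ω) with hW
  have hWm : Measurable W := hFm.comp hVvecm
  -- independence of `P B₁` and `W` via NTR along the chain
  set B : Fin (M+1) → Set 𝒳 := fun j => K (j : ℕ) with hB
  have hiid := hNTR M B (fun j => hKF _) (fun i j hij => hKmon hij)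
  set f : Fin (M+1) → Ω → ℝ := fun i => Fin.cases (motive := fun _ => Ω → ℝ)
    (P (B 0)) (fun i' : Fin M => Vr P (B i'.castSucc) (B i'.succ)) i with hf
  have hf0 : f 0 = P (K 0) := by simp [hf, hB]
  have hfs : ∀ i' : Fin M, f i'.succ = Vr P (K (i' : ℕ)) (K ((i' : ℕ) + 1)) := by
    intro i'
    simp [hf, hB]
  have hfmeas : ∀ i, Measurable (f i) := by
    intro i
    refine Fin.cases ?_ (fun i' => ?_) i
    · rw [hf0]; exact hP.meas _ (hKm 0)
    · rw [hfs]; exact measurable_Vr hP (hKm _) (hKm _)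
  have hST : Disjoint ({0} : Finset (Fin (M+1))) (Finset.univ.erase 0) := by
    simp
  have hIndepST := hiid.indepFun_finset {0} (Finset.univ.erase 0) hST hfmeas
  set φL : (({0} : Finset (Fin (M+1))) → ℝ) → ℝ :=
    fun v => v ⟨0, Finset.mem_singleton_self 0⟩ with hφL
  set ψR : ((Finset.univ.erase (0 : Fin (M+1))) → ℝ) → (Fin M → ℝ) := fun v l =>
    v ⟨l.succ, Finset.mem_erase.mpr ⟨Fin.succ_ne_zero l, Finset.mem_univ _⟩⟩ with hψR
  have hφLm : Measurable φL := measurable_pi_apply _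
  have hψRm : Measurable ψR := measurable_pi_lambda _ fun l => measurable_pi_apply _
  have hIndep2 := hIndepST.comp hφLm hψRm
  have hltfun : (φL ∘ fun a (i : ({0} : Finset (Fin (M+1)))) => f i a) = P B₁ := by
    funext ω
    exact congrArg (fun s => P s ω) hK0
  have hrtfun : (ψR ∘ fun a (i : (Finset.univ.erase (0 : Fin (M+1)))) => f i a) = Vvec := rfl
  have hIndepPV : IndepFun (P B₁) Vvec Pr := by
    rw [← hltfun, ← hrtfun]
    exact hIndep2
  have hIndepPW : IndepFun (P B₁) W Pr := by
    have h := hIndepPV.comp measurable_id hFm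
    simpa [Function.comp_def] using h
  -- almost sure additivity facts
  have hAdd : ∀ᵐ ω ∂Pr, ∀ j : ℕ, P (K (j+1)) ω = P (K j) ω + P (K (j+1) \ K j) ω := by
    rw [MeasureTheory.ae_all_iff]
    intro j
    have h := rpm_add_pair hP (hKm j) ((hKm (j+1)).diff (hKm j)) disjoint_sdiff_right
    rwa [Set.union_diff_cancel (hKmono j)] at h
  have hsetD : ∀ i : Fin n, Bv i ∩ B₁ᶜ = ⋃ j ∈ J i, (K (j+1) \ K j) := by
    intro i
    have hCi := (hJ i).2
    have hB₁K : ∀ j, B₁ ⊆ K j := fun j => hK0 ▸ hKmon (Nat.zero_le j)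
    ext x
    constructor
    · rintro ⟨hxB, hxc⟩
      have hxC : x ∈ B₁ ∪ Bv i := Or.inr hxB
      rw [hCi] at hxC
      rcases hxC with h | h
      · exact absurd h hxc
      · exact h
    · intro hx
      simp only [mem_iUnion] at hx
      obtain ⟨j, hj, hxj⟩ := hx
      have hxnB : x ∉ B₁ := fun hxB => hxj.2 (hB₁K j hxB)
      have hxC : x ∈ B₁ ∪ Bv i := by
        rw [hCi]
        exact Or.inr (mem_biUnion hj hxj)
      rcases hxC with h | h
      · exact absurd h hxnB
      · exact ⟨h, hxnB⟩
  have hdisjpair : ∀ a b : ℕ, a < b → Disjoint (K (a+1) \ K a) (K (b+1) \ K b) :=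
    fun a b hab => Set.disjoint_left.mpr fun x hx hx' =>
      hx'.2 (hKmon (by omega : a + 1 ≤ b) hx.1)
  have hDsum : ∀ᵐ ω ∂Pr, ∀ i : Fin n, P (Bv i ∩ B₁ᶜ) ω = ∑ j ∈ J i, P (K (j+1) \ K j) ω := by
    rw [MeasureTheory.ae_all_iff]
    intro i
    have hdJ : ((J i : Set ℕ)).Pairwise (Function.onFun Disjoint fun j => K (j+1) \ K j) := by
      intro a _ b _ hne
      rcases lt_or_gt_of_ne hne with h | h
      · exact hdisjpair a b h
      · exact (hdisjpair b a h).symm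
    have h := rpm_add_finset hP (J i) (fun j => K (j+1) \ K j)
      (fun j => (hKm (j+1)).diff (hKm j)) hdJ
    rw [← hsetD i] at h
    exact h
  have hmain : ∀ᵐ ω ∂Pr, W ω ∈ Set.Icc (0:ℝ) 1 ∧
      (∏ i, P (Bv i ∩ B₁ᶜ) ω) = (1 - P B₁ ω) ^ n * W ω := by
    filter_upwards [hAdd, hDsum] with ω hAddω hDω
    have hIcc : ∀ A : Set 𝒳, MeasurableSet A → P A ω ∈ Set.Icc (0:ℝ) 1 :=
      fun A hA => hP.mem_Icc A hA ω
    have hVIcc : ∀ l, V l ω ∈ Set.Icc (0:ℝ) 1 := by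
      intro l
      have hd := hAddω l
      have h1 := hIcc (K l) (hKm l)
      have h2 := hIcc (K (l+1)) (hKm (l+1))
      have h3 := hIcc _ ((hKm (l+1)).diff (hKm l))
      by_cases hlt : P (K l) ω < 1
      · have hVl : V l ω = (P (K (l+1)) ω - P (K l) ω) / (1 - P (K l) ω) := by
          simp [hV, Vr, hlt]
        rw [hVl]
        constructor
        · apply div_nonneg
          · linarith [h3.1]
          · linarith
        · rw [div_le_one (by linarith)]
          linarith [h2.2]
      · have hVl : V l ω = 1 := by simp [hV, Vr, hlt]
        rw [hVl]
        exact ⟨zero_le_one, le_rfl⟩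
    have claim1 : ∀ j, 1 - P (K j) ω
        = (1 - P (K 0) ω) * ∏ l ∈ Finset.range j, (1 - V l ω) := by
      intro j
      induction j with
      | zero => simp
      | succ j ihj =>
        rw [Finset.prod_range_succ, ← mul_assoc, ← ihj]
        by_cases hlt : P (K j) ω < 1
        · have hVj : V j ω = (P (K (j+1)) ω - P (K j) ω) / (1 - P (K j) ω) := by
            simp [hV, Vr, hlt]
          have hne : 1 - P (K j) ω ≠ 0 := by linarith
          rw [hVj]
          field_simp
          ring
        · have h1 := (hIcc (K j) (hKm j)).2
          have hPj : P (K j) ω = 1 := le_antisymm h1 (not_lt.mp hlt)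
          have hd := hAddω j
          have h3 := hIcc _ ((hKm (j+1)).diff (hKm j))
          have h2 := (hIcc (K (j+1)) (hKm (j+1))).2
          have hPj1 : P (K (j+1)) ω = 1 := le_antisymm h2 (by linarith [h3.1])
          rw [hPj, hPj1]
          ring
    have claim2 : ∀ j, P (K (j+1) \ K j) ω
        = (1 - P (K 0) ω) * ((∏ l ∈ Finset.range j, (1 - V l ω)) * V j ω) := by
      intro j
      have hd := hAddω j
      have e1 := claim1 j
      have e2 := claim1 (j+1)
      rw [Finset.prod_range_succ] at e2
      have hdd : P (K (j+1) \ K j) ω = (1 - P (K j) ω) - (1 - P (K (j+1)) ω) := by linarith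
      rw [hdd, e1, e2]
      ring
    have hWval : W ω = ∏ i, ∑ j ∈ J i, (∏ l ∈ Finset.range j, (1 - V l ω)) * V j ω := by
      simp only [hW, hF, hVvec]
      refine Finset.prod_congr rfl fun i _ => ?_
      rw [← Finset.sum_attach (J i) (fun j => (∏ l ∈ Finset.range j, (1 - V l ω)) * V j ω)]
      refine Finset.sum_congr rfl fun j _ => ?_
      congr 1
      rw [← Finset.prod_attach (Finset.range (j : ℕ)) (fun l => (1 - V l ω))]
    have hw01 : ∀ j, 0 ≤ (∏ l ∈ Finset.range j, (1 - V l ω)) * V j ω := fun j =>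
      mul_nonneg (Finset.prod_nonneg fun l _ => by linarith [(hVIcc l).2]) (hVIcc j).1
    have hHle : ∀ i : Fin n,
        (∑ j ∈ J i, (∏ l ∈ Finset.range j, (1 - V l ω)) * V j ω) ≤ 1 := by
      intro i
      have hsub : J i ⊆ Finset.range M := fun j hj => Finset.mem_range.mpr (hJlt i j hj)
      have hle1 : (∑ j ∈ J i, (∏ l ∈ Finset.range j, (1 - V l ω)) * V j ω)
          ≤ ∑ j ∈ Finset.range M, (∏ l ∈ Finset.range j, (1 - V l ω)) * V j ω :=
        Finset.sum_le_sum_of_subset_of_nonneg hsub (fun j _ _ => hw01 j)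
      have hle2 := sum_prod_range M (fun l => V l ω)
      have hprodnn : 0 ≤ ∏ l ∈ Finset.range M, (1 - V l ω) :=
        Finset.prod_nonneg fun l _ => by linarith [(hVIcc l).2]
      calc (∑ j ∈ J i, (∏ l ∈ Finset.range j, (1 - V l ω)) * V j ω)
          ≤ ∑ j ∈ Finset.range M, (∏ l ∈ Finset.range j, (1 - V l ω)) * V j ω := hle1
        _ = 1 - ∏ l ∈ Finset.range M, (1 - V l ω) := hle2
        _ ≤ 1 := by linarith
    have hHnn : ∀ i : Fin n,
        0 ≤ ∑ j ∈ J i, (∏ l ∈ Finset.range j, (1 - V l ω)) * V j ω :=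
      fun i => Finset.sum_nonneg fun j _ => hw01 j
    constructor
    · rw [hWval]
      exact ⟨Finset.prod_nonneg fun i _ => hHnn i,
        Finset.prod_le_one (fun i _ => hHnn i) (fun i _ => hHle i)⟩
    · have hPD : ∀ i : Fin n, P (Bv i ∩ B₁ᶜ) ω
          = (1 - P B₁ ω) * ∑ j ∈ J i, (∏ l ∈ Finset.range j, (1 - V l ω)) * V j ω := by
        intro i
        rw [hDω i, Finset.mul_sum]
        refine Finset.sum_congr rfl fun j _ => ?_
        rw [claim2 j, hK0]
      calc ∏ i, P (Bv i ∩ B₁ᶜ) ω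
          = ∏ i : Fin n, ((1 - P B₁ ω)
            * ∑ j ∈ J i, (∏ l ∈ Finset.range j, (1 - V l ω)) * V j ω) :=
            Finset.prod_congr rfl fun i _ => hPD i
        _ = (1 - P B₁ ω) ^ n * W ω := by
            rw [Finset.prod_mul_distrib, Finset.prod_const, Finset.card_univ,
              Fintype.card_fin, hWval]
  exact ⟨W, hWm, hmain.mono fun ω h => h.1, hIndepPW, hmain.mono fun ω h => h.2⟩

end MainProof

/-- Proposition 4.7(a). For a neutral to the right `P` and a sample `X̲`,
for `αₙ`-almost all `x̲` with all coordinates outside `B₁`,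
`𝒫[P_{B₁} ∈ Γ | X̲ = x̲] = E[1_Γ(P_{B₁})(1-P_{B₁})ⁿ] / E[(1-P_{B₁})ⁿ]`. -/
theorem stmt14 (I : IndexingCollection 𝒳) (Pr : Measure Ω) [IsProbabilityMeasure Pr]
    (P : Set 𝒳 → Ω → ℝ) (hP : IsRPM Pr P) (hNTR : IsNTR I Pr P)
    (n : ℕ) (X : Fin n → Ω → 𝒳) (hX : IsSample Pr P X)
    (B₁ : Set 𝒳) (hB₁ : B₁ ∈ finUnions I.sets)
    -- `μpost = μ^{(x̲)}_{B₁}` : a regular conditional distribution of `P_{B₁}` given `X̲ = x̲`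
    (μpost : Kernel (Fin n → 𝒳) ℝ) [IsMarkovKernel μpost]
    (hμpost : ∀ T : Set (Fin n → 𝒳), MeasurableSet T → ∀ Γ : Set ℝ, MeasurableSet Γ →
      Pr {ω | (fun i => X i ω) ∈ T ∧ P B₁ ω ∈ Γ}
        = ∫⁻ x in T, μpost x Γ ∂(Pr.map (fun ω (i : Fin n) => X i ω))) :
    ∀ Γ : Set ℝ, MeasurableSet Γ →
      ∀ᵐ x ∂(Pr.map (fun ω (i : Fin n) => X i ω)),
        (∀ i, x i ∈ B₁ᶜ) →
          μpost x Γ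
            = (∫⁻ ω, Γ.indicator (fun _ => (1:ℝ≥0∞)) (P B₁ ω)
                  * ENNReal.ofReal ((1 - P B₁ ω) ^ n) ∂Pr)
              / ∫⁻ ω, ENNReal.ofReal ((1 - P B₁ ω) ^ n) ∂Pr := by
  classical
  intro Γ hΓ
  have hB₁m : MeasurableSet B₁ := StmtAux.measurableSet_of_mem_finUnions I hB₁
  have hXvec : Measurable (fun ω (i : Fin n) => X i ω) := measurable_pi_lambda _ hX.1
  have hPB1 : Measurable (P B₁) := hP.meas B₁ hB₁m
  set α := Pr.map (fun ω (i : Fin n) => X i ω) with hα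
  haveI hαP : IsProbabilityMeasure α := Measure.isProbabilityMeasure_map hXvec.aemeasurable
  set T : Set (Fin n → 𝒳) := Set.pi univ (fun _ => B₁ᶜ) with hT
  have hTm : MeasurableSet T := MeasurableSet.univ_pi fun _ => hB₁m.compl
  set cΓ : ℝ≥0∞ := ∫⁻ ω, Γ.indicator (fun _ => (1:ℝ≥0∞)) (P B₁ ω)
      * ENNReal.ofReal ((1 - P B₁ ω) ^ n) ∂Pr with hcΓ
  set c1 : ℝ≥0∞ := ∫⁻ ω, ENNReal.ofReal ((1 - P B₁ ω) ^ n) ∂Pr with hc1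
  -- pointwise facts about `P B₁`
  have hIccP : ∀ ω, P B₁ ω ∈ Set.Icc (0:ℝ) 1 := hP.mem_Icc B₁ hB₁m
  have hφu_nonneg : ∀ ω, 0 ≤ (1 - P B₁ ω) ^ n := fun ω =>
    pow_nonneg (by linarith [(hIccP ω).2]) n
  have hφu_le : ∀ ω, (1 - P B₁ ω) ^ n ≤ 1 := fun ω =>
    pow_le_one₀ (by linarith [(hIccP ω).2]) (by linarith [(hIccP ω).1])
  have hφm : ∀ Γ' : Set ℝ, MeasurableSet Γ' →
      Measurable (fun ω => Γ'.indicator (fun _ => (1:ℝ)) (P B₁ ω) * (1 - P B₁ ω) ^ n) :=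
    fun Γ' hΓ' => ((measurable_const.indicator hΓ').comp hPB1).mul
      ((measurable_const.sub hPB1).pow_const n)
  have hφnn : ∀ (Γ' : Set ℝ) ω,
      0 ≤ Γ'.indicator (fun _ => (1:ℝ)) (P B₁ ω) * (1 - P B₁ ω) ^ n := fun Γ' ω =>
    mul_nonneg (Set.indicator_nonneg (fun _ _ => zero_le_one) _) (hφu_nonneg ω)
  have hφle : ∀ (Γ' : Set ℝ) ω,
      Γ'.indicator (fun _ => (1:ℝ)) (P B₁ ω) * (1 - P B₁ ω) ^ n ≤ 1 := by
    intro Γ' ω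
    by_cases h : P B₁ ω ∈ Γ' <;>
      simp [Set.indicator_of_mem, Set.indicator_of_notMem, h, hφu_le ω, hφu_nonneg ω]
  have hφint : ∀ Γ' : Set ℝ, MeasurableSet Γ' →
      Integrable (fun ω => Γ'.indicator (fun _ => (1:ℝ)) (P B₁ ω) * (1 - P B₁ ω) ^ n) Pr := by
    intro Γ' hΓ'
    refine Integrable.mono' (integrable_const (1:ℝ)) (hφm Γ' hΓ').aestronglyMeasurable
      (Filter.Eventually.of_forall fun ω => ?_)
    rw [Real.norm_eq_abs, abs_of_nonneg (hφnn Γ' ω)]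
    exact hφle Γ' ω
  have hcΓr : ∀ (Γ' : Set ℝ), MeasurableSet Γ' →
      (∫⁻ ω, Γ'.indicator (fun _ => (1:ℝ≥0∞)) (P B₁ ω)
          * ENNReal.ofReal ((1 - P B₁ ω) ^ n) ∂Pr)
        = ENNReal.ofReal
            (∫ ω, Γ'.indicator (fun _ => (1:ℝ)) (P B₁ ω) * (1 - P B₁ ω) ^ n ∂Pr) := by
    intro Γ' hΓ'
    rw [MeasureTheory.ofReal_integral_eq_lintegral_ofReal (hφint Γ' hΓ')
      (Filter.Eventually.of_forall (hφnn Γ'))]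
    refine lintegral_congr fun ω => ?_
    by_cases h : P B₁ ω ∈ Γ' <;>
      simp [Set.indicator_of_mem, Set.indicator_of_notMem, h]
  have hcΓR : cΓ = ENNReal.ofReal
      (∫ ω, Γ.indicator (fun _ => (1:ℝ)) (P B₁ ω) * (1 - P B₁ ω) ^ n ∂Pr) := by
    rw [hcΓ]; exact hcΓr Γ hΓ
  have hc1R : c1 = ENNReal.ofReal
      (∫ ω, (univ : Set ℝ).indicator (fun _ => (1:ℝ)) (P B₁ ω) * (1 - P B₁ ω) ^ n ∂Pr) := by
    rw [hc1, ← hcΓr univ MeasurableSet.univ]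
    refine lintegral_congr fun ω => ?_
    simp
  -- the key factorization identity
  have key : ∀ (Bv : Fin n → Set 𝒳), (∀ i, Bv i ∈ finUnions I.sets) →
      c1 * Pr {ω | (∀ i, X i ω ∈ Bv i ∩ B₁ᶜ) ∧ P B₁ ω ∈ Γ}
        = cΓ * Pr {ω | (∀ i, X i ω ∈ Bv i ∩ B₁ᶜ) ∧ P B₁ ω ∈ (univ : Set ℝ)} := by
    intro Bv hBv
    obtain ⟨W, hWm, hWbd, hWind, hWeq⟩ := decomp I hP hNTR hB₁ Bv hBv
    have hDm : ∀ i, MeasurableSet (Bv i ∩ B₁ᶜ) := fun i =>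
      (StmtAux.measurableSet_of_mem_finUnions I (hBv i)).inter hB₁m.compl
    have hsΓ := stepB hP hX hB₁m _ hDm Γ hΓ
    have hsu := stepB hP hX hB₁m _ hDm univ MeasurableSet.univ
    have hWint : Integrable W Pr := by
      refine Integrable.mono' (integrable_const (1:ℝ)) hWm.aestronglyMeasurable ?_
      filter_upwards [hWbd] with ω h
      rw [Real.norm_eq_abs, abs_of_nonneg h.1]
      exact h.2
    have hIW : ∀ (Γ' : Set ℝ), MeasurableSet Γ' →
        ∫ ω, Γ'.indicator (fun _ => (1:ℝ)) (P B₁ ω) * ∏ i, P (Bv i ∩ B₁ᶜ) ω ∂Pr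
          = (∫ ω, Γ'.indicator (fun _ => (1:ℝ)) (P B₁ ω) * (1 - P B₁ ω) ^ n ∂Pr)
            * ∫ ω, W ω ∂Pr := by
      intro Γ' hΓ'
      have hcongr : (fun ω => Γ'.indicator (fun _ => (1:ℝ)) (P B₁ ω) * ∏ i, P (Bv i ∩ B₁ᶜ) ω)
          =ᵐ[Pr] fun ω =>
            (Γ'.indicator (fun _ => (1:ℝ)) (P B₁ ω) * (1 - P B₁ ω) ^ n) * W ω := by
        filter_upwards [hWeq] with ω h
        rw [h, mul_assoc]
      rw [integral_congr_ae hcongr]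
      have hφPm : Measurable (fun t : ℝ => Γ'.indicator (fun _ => (1:ℝ)) t * (1 - t) ^ n) :=
        (measurable_const.indicator hΓ').mul ((measurable_const.sub measurable_id).pow_const n)
      have hind : IndepFun
          (fun ω => Γ'.indicator (fun _ => (1:ℝ)) (P B₁ ω) * (1 - P B₁ ω) ^ n) W Pr := by
        have h := hWind.comp hφPm measurable_id
        simpa [Function.comp_def] using h
      have h := hind.integral_mul_eq_mul_integral (hφint Γ' hΓ').aestronglyMeasurable hWint.aestronglyMeasurable
      simpa [Pi.mul_apply] using h
    rw [hsΓ, hsu, hIW Γ hΓ, hIW univ MeasurableSet.univ, hcΓR, hc1R,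
      ← ENNReal.ofReal_mul (integral_nonneg fun ω => hφnn univ ω),
      ← ENNReal.ofReal_mul (integral_nonneg fun ω => hφnn Γ ω)]
    congr 1
    ring
  -- computation of the two measures on the generating π-system
  have hscompute : ∀ (Bv : Fin n → Set 𝒳), (∀ i, Bv i ∈ finUnions I.sets) →
      (c1 • ((α.restrict T).withDensity fun x => μpost x Γ)) (Set.pi univ Bv)
        = (cΓ • (α.restrict T)) (Set.pi univ Bv) := by
    intro Bv hBv
    have hBvm : ∀ i, MeasurableSet (Bv i) := fun i =>
      StmtAux.measurableSet_of_mem_finUnions I (hBv i)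
    have hsm : MeasurableSet (Set.pi univ Bv) := MeasurableSet.univ_pi hBvm
    have hsT : Set.pi univ Bv ∩ T = Set.pi univ (fun i => Bv i ∩ B₁ᶜ) := by
      rw [hT, ← Set.pi_inter_distrib]
    have hsTm : MeasurableSet (Set.pi univ Bv ∩ T) := hsm.inter hTm
    have hpre : (fun ω (i : Fin n) => X i ω) ⁻¹' (Set.pi univ Bv ∩ T)
        = {ω | (∀ i, X i ω ∈ Bv i ∩ B₁ᶜ) ∧ P B₁ ω ∈ (univ : Set ℝ)} := by
      ext ω
      simp [hsT, Set.mem_pi]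
    have h1 : (c1 • ((α.restrict T).withDensity fun x => μpost x Γ)) (Set.pi univ Bv)
        = c1 * ∫⁻ x in Set.pi univ Bv ∩ T, μpost x Γ ∂α := by
      rw [Measure.smul_apply, smul_eq_mul, withDensity_apply _ hsm,
        Measure.restrict_restrict hsm]
    have h2 := hμpost (Set.pi univ Bv ∩ T) hsTm Γ hΓ
    have hsetΓ : {ω | (fun i => X i ω) ∈ (Set.pi univ Bv ∩ T) ∧ P B₁ ω ∈ Γ}
        = {ω | (∀ i, X i ω ∈ Bv i ∩ B₁ᶜ) ∧ P B₁ ω ∈ Γ} := by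
      ext ω
      rw [hsT]
      simp [Set.mem_pi]
    have h3 : (cΓ • (α.restrict T)) (Set.pi univ Bv) = cΓ * α (Set.pi univ Bv ∩ T) := by
      rw [Measure.smul_apply, smul_eq_mul, Measure.restrict_apply hsm]
    have h4 : α (Set.pi univ Bv ∩ T)
        = Pr {ω | (∀ i, X i ω ∈ Bv i ∩ B₁ᶜ) ∧ P B₁ ω ∈ (univ : Set ℝ)} := by
      rw [hα, Measure.map_apply hXvec hsTm, hpre]
    rw [h1, ← h2, hsetΓ, h3, h4]
    exact key Bv hBv
  have hc1le : c1 ≤ 1 := by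
    rw [hc1]
    calc ∫⁻ ω, ENNReal.ofReal ((1 - P B₁ ω) ^ n) ∂Pr ≤ ∫⁻ _, 1 ∂Pr :=
        lintegral_mono fun ω => ENNReal.ofReal_le_one.mpr (hφu_le ω)
      _ = 1 := by simp
  have hcΓle : cΓ ≤ 1 := by
    rw [hcΓ]
    calc ∫⁻ ω, Γ.indicator (fun _ => (1:ℝ≥0∞)) (P B₁ ω)
          * ENNReal.ofReal ((1 - P B₁ ω) ^ n) ∂Pr
        ≤ ∫⁻ _, 1 ∂Pr := by
          refine lintegral_mono fun ω => ?_
          by_cases h : P B₁ ω ∈ Γ <;>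
            simp [Set.indicator_of_mem, Set.indicator_of_notMem, h,
              ENNReal.ofReal_le_one.mpr (hφu_le ω)]
      _ = 1 := by simp
  set m1 : Measure (Fin n → 𝒳) := c1 • ((α.restrict T).withDensity fun x => μpost x Γ)
    with hm1
  set m2 : Measure (Fin n → 𝒳) := cΓ • (α.restrict T) with hm2
  haveI hfm1 : IsFiniteMeasure m1 := by
    constructor
    rw [hm1, Measure.smul_apply, smul_eq_mul]
    have hden : ((α.restrict T).withDensity fun x => μpost x Γ) univ ≤ 1 := by
      rw [withDensity_apply _ MeasurableSet.univ]
      calc ∫⁻ x in univ, μpost x Γ ∂(α.restrict T)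
          ≤ ∫⁻ _ in univ, 1 ∂(α.restrict T) := lintegral_mono fun x => prob_le_one
        _ ≤ 1 := by
            rw [setLIntegral_one, Measure.restrict_apply MeasurableSet.univ, Set.univ_inter]
            exact prob_le_one
    exact lt_of_le_of_lt (mul_le_one' hc1le hden) ENNReal.one_lt_top
  haveI hfm2 : IsFiniteMeasure m2 := by
    constructor
    rw [hm2, Measure.smul_apply, smul_eq_mul]
    have hres : (α.restrict T) univ ≤ 1 := by
      rw [Measure.restrict_apply MeasurableSet.univ, Set.univ_inter]
      exact prob_le_one
    exact lt_of_le_of_lt (mul_le_one' hcΓle hres) ENNReal.one_lt_top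
  have hgen : (inferInstance : MeasurableSpace (Fin n → 𝒳))
      = MeasurableSpace.generateFrom
          (Set.pi univ '' Set.pi univ fun _ : Fin n => finUnions I.sets) := by
    have hspan : ∀ _i : Fin n, IsCountablySpanning (finUnions I.sets) := fun _ =>
      ⟨fun _ => univ, fun _ => StmtAux.univ_mem_finUnions I, Set.iUnion_const univ⟩
    have h := _root_.generateFrom_pi_eq (C := fun _ : Fin n => finUnions I.sets) hspan
    have h0 : (fun _ : Fin n => MeasurableSpace.generateFrom (finUnions I.sets))
        = fun _ : Fin n => ‹MeasurableSpace 𝒳› :=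
      funext fun _ => StmtAux.generateFrom_finUnions_eq I
    rw [h0] at h
    exact h
  have hmeq : m1 = m2 := by
    refine ext_of_generate_finite _ hgen
      (IsPiSystem.pi fun _ => StmtAux.isPiSystem_finUnions I) ?_ ?_
    · rintro s ⟨Bv, hBv, rfl⟩
      exact hscompute Bv fun i => hBv i (mem_univ i)
    · have h := hscompute (fun _ => univ) (fun _ => StmtAux.univ_mem_finUnions I)
      simpa [Set.pi_univ] using h
  by_cases hc10 : c1 = 0
  · -- then `α T = 0` and the statement is vacuous
    have hc1plain : c1 = ENNReal.ofReal (∫ ω, (1 - P B₁ ω) ^ n ∂Pr) := by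
      rw [hc1R]
      congr 1
      refine integral_congr_ae (Filter.Eventually.of_forall fun ω => ?_)
      simp
    have hTzero : α T = 0 := by
      have hpre2 : (fun ω (i : Fin n) => X i ω) ⁻¹' T
          = {ω | (∀ i, X i ω ∈ B₁ᶜ) ∧ P B₁ ω ∈ (univ : Set ℝ)} := by
        ext ω
        simp [hT, Set.mem_pi]
      rw [hα, Measure.map_apply hXvec hTm, hpre2,
        stepB hP hX hB₁m (fun _ => B₁ᶜ) (fun _ => hB₁m.compl) univ MeasurableSet.univ]
      have hcongr2 : (fun ω => (univ : Set ℝ).indicator (fun _ => (1:ℝ)) (P B₁ ω)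
            * ∏ _i : Fin n, P B₁ᶜ ω)
          =ᵐ[Pr] fun ω => (1 - P B₁ ω) ^ n := by
        filter_upwards [StmtAux.rpm_compl_eq hP hB₁m] with ω h
        simp [h, Finset.prod_const, Finset.card_univ]
      rw [integral_congr_ae hcongr2, ← hc1plain]
      exact hc10
    have hae : ∀ᵐ x ∂α, x ∉ T := by
      rw [ae_iff]
      have hsetc : {x : Fin n → 𝒳 | ¬ x ∉ T} = T := by
        ext x
        simp
      rw [hsetc]
      exact hTzero
    filter_upwards [hae] with x hx hmem
    exact absurd (Set.mem_univ_pi.mpr hmem) hx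
  · have hc1top : c1 ≠ ∞ := (hc1le.trans_lt ENNReal.one_lt_top).ne
    have haeR : ∀ᵐ x ∂(α.restrict T), μpost x Γ = cΓ / c1 := by
      refine ae_eq_of_forall_setLIntegral_eq_of_sigmaFinite (μpost.measurable_coe hΓ)
        measurable_const ?_
      intro s hs _
      have h12 := Measure.ext_iff.mp hmeq s hs
      rw [hm1, hm2] at h12
      simp only [Measure.smul_apply, smul_eq_mul] at h12
      rw [withDensity_apply _ hs] at h12
      rw [setLIntegral_const]
      have heq := (ENNReal.eq_div_iff hc10 hc1top).mpr h12
      rw [heq, ENNReal.div_eq_inv_mul, ENNReal.div_eq_inv_mul]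
      ring
    have hres := (ae_restrict_iff' hTm).mp haeR
    filter_upwards [hres] with x hx hmem
    exact hx (Set.mem_univ_pi.mpr hmem)
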